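/- arXiv:1702.08735 — 3 statements merged into one kernel-verified Lean document; each statement's English description precedes it below -/
import Mathlib

section
/- Chattering lemma (deterministic version): Let U be a compact metric space and (μ_t)_{t ∈ [0,T]} a measurable family of probability measures on U. Then there exists a sequence of measurable functions uₙ : [0,T] → U such that the measures δ_{uₙ(t)}(da) dt converge weakly (as finite measures on [0,T] × U) to μ_t(da) dt. -/
open MeasureTheory Filter Topology

/-- cumulative distribution over the cells `A 0, ..., A j` -/
noncomputable def chatQ {U : Type*} [MeasurableSpace U] (μ : ℝ → Measure U)
    (A : ℕ → Set U) (j : ℕ) (t : ℝ) : ℝ :=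
  ∑ i ∈ Finset.range (j+1), (μ t (A i)).toReal

/-- integral of `chatQ` over the grid interval containing `t` (grid of mesh `h`) -/
noncomputable def chatD {U : Type*} [MeasurableSpace U] (μ : ℝ → Measure U)
    (A : ℕ → Set U) (h : ℝ) (j : ℕ) (t : ℝ) : ℝ :=
  ∫ s in (h*⌊t/h⌋)..(h*⌊t/h⌋+h), chatQ μ A j s

/-- index of the cell used by the chattering control at time `t` -/
noncomputable def chatIdx {U : Type*} [MeasurableSpace U] (μ : ℝ → Measure U)
    (A : ℕ → Set U) (h : ℝ) (t : ℝ) : ℕ :=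
  sInf {j | t - h*⌊t/h⌋ < chatD μ A h j t}

set_option maxHeartbeats 1000000 in
private lemma chattering_aux {U : Type*} [MetricSpace U] [CompactSpace U]
    [MeasurableSpace U] [BorelSpace U] (T : ℝ) (hT : 0 < T)
    (μ : ℝ → Measure U) (hprob : ∀ t, IsProbabilityMeasure (μ t))
    (hmeas : ∀ A : Set U, MeasurableSet A → Measurable fun t => μ t A)
    (a : ℕ → U) (A : ℕ → Set U) (m : ℕ)
    (hAm : ∀ j, MeasurableSet (A j))
    (hAd : Pairwise (Function.onFun Disjoint A))
    (hAc : (⋃ i ∈ Finset.range (m+1), A i) = Set.univ)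
    (r : ℝ) (hr : 0 ≤ r) (hAr : ∀ j, A j ⊆ Metric.closedBall (a j) r)
    (n : ℕ) (hn : 0 < n) :
    ∃ u : ℝ → U, Measurable u ∧
      ∀ (φ : ℝ × U → ℝ), Continuous φ → (∃ M, ∀ p, |φ p| ≤ M) →
      ∀ ε : ℝ, 0 ≤ ε →
      (∀ s t : ℝ, s ∈ Set.Icc 0 T → t ∈ Set.Icc 0 T → ∀ x y : U,
          |s - t| ≤ T/n → dist x y ≤ r → |φ (s,x) - φ (t,y)| ≤ ε) →
      |(∫ t in Set.Icc (0:ℝ) T, φ (t, u t)) -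
        ∫ t in Set.Icc (0:ℝ) T, ∫ x, φ (t,x) ∂(μ t)| ≤ 3*T*ε := by
  classical
  set h : ℝ := T / n with hh
  have hhpos : 0 < h := by positivity
  -- basic facts about the cell masses
  have hp_meas : ∀ j, Measurable fun t => (μ t (A j)).toReal :=
    fun j => (hmeas (A j) (hAm j)).ennreal_toReal
  have hp_nonneg : ∀ j t, 0 ≤ (μ t (A j)).toReal := fun j t => ENNReal.toReal_nonneg
  have hq_meas : ∀ j, Measurable (chatQ μ A j) := by
    intro j
    exact Finset.measurable_sum _ fun i _ => hp_meas i
  have hq_nonneg : ∀ j t, 0 ≤ chatQ μ A j t :=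
    fun j t => Finset.sum_nonneg fun i _ => hp_nonneg i t
  have hq_eq : ∀ j t, chatQ μ A j t = (μ t (⋃ i ∈ Finset.range (j+1), A i)).toReal := by
    intro j t
    rw [measure_biUnion_finset (fun i _ j _ hij => hAd hij) (fun i _ => hAm i),
      ENNReal.toReal_sum (fun i _ => measure_ne_top (μ t) (A i))]
    rfl
  have hq_le_one : ∀ j t, chatQ μ A j t ≤ 1 := by
    intro j t
    rw [hq_eq]
    have h1 : μ t (⋃ i ∈ Finset.range (j+1), A i) ≤ 1 := by
      rw [← (hprob t).measure_univ]
      exact measure_mono (Set.subset_univ _)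
    exact le_trans (ENNReal.toReal_mono ENNReal.one_ne_top h1) (by simp)
  have hq_mono : ∀ t, Monotone fun j => chatQ μ A j t := by
    intro t j j' hjj'
    exact Finset.sum_le_sum_of_subset_of_nonneg
      (Finset.range_subset_range.2 (by omega)) (fun i _ _ => hp_nonneg i t)
  have hq_top : ∀ t, chatQ μ A m t = 1 := by
    intro t
    rw [hq_eq, hAc, (hprob t).measure_univ, ENNReal.toReal_one]
  -- integrability of bounded measurable functions
  have hbint : ∀ (g : ℝ → ℝ), Measurable g → (∀ t, |g t| ≤ 1) →
      ∀ x y : ℝ, IntervalIntegrable g volume x y := by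
    intro g hg hgb x y
    rw [intervalIntegrable_iff]
    refine Integrable.mono' (g := fun _ => (1:ℝ)) ?_ hg.aestronglyMeasurable ?_
    · exact integrableOn_const measure_Ioc_lt_top.ne
    · exact Eventually.of_forall fun t => by simpa [Real.norm_eq_abs] using hgb t
  have hq_int : ∀ j x y, IntervalIntegrable (chatQ μ A j) volume x y := by
    intro j
    exact hbint _ (hq_meas j) (fun t => abs_le.2 ⟨by linarith [hq_nonneg j t], hq_le_one j t⟩)
  have hQ_cont : ∀ j, Continuous fun x => ∫ s in (0:ℝ)..x, chatQ μ A j s :=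
    fun j => intervalIntegral.continuous_primitive (fun x y => hq_int j x y) 0
  -- the grid projection
  set τ : ℝ → ℝ := fun t => h * ⌊t / h⌋ with hτ
  have hτapp : ∀ t, τ t = h * ⌊t / h⌋ := fun t => rfl
  have hτ_le : ∀ t, τ t ≤ t := by
    intro t
    rw [hτ]
    have := Int.floor_le (t / h)
    calc h * (⌊t / h⌋ : ℝ) ≤ h * (t / h) := by
          exact mul_le_mul_of_nonneg_left this hhpos.le
      _ = t := by field_simp
  have hτ_lt : ∀ t, t < τ t + h := by
    intro t
    have := Int.lt_floor_add_one (t / h)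
    have h2 : t / h * h < ((⌊t / h⌋ : ℝ) + 1) * h := by
      exact mul_lt_mul_of_pos_right this hhpos
    rw [div_mul_cancel₀ _ hhpos.ne'] at h2
    rw [hτ]; nlinarith
  have hτ_meas : Measurable τ := by
    apply Measurable.const_mul
    exact measurable_from_top.comp (Measurable.floor (measurable_id.div_const h))
  -- rewrite chatD
  have hD_def : ∀ j t, chatD μ A h j t = ∫ s in (τ t)..(τ t + h), chatQ μ A j s := by
    intro j t; rfl
  have hD_eq : ∀ j t, chatD μ A h j t =
      (∫ s in (0:ℝ)..(τ t + h), chatQ μ A j s) - ∫ s in (0:ℝ)..(τ t), chatQ μ A j s := by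
    intro j t
    have := intervalIntegral.integral_add_adjacent_intervals
      (hq_int j 0 (τ t)) (hq_int j (τ t) (τ t + h))
    rw [hD_def]; linarith
  have hD_meas : ∀ j, Measurable fun t => chatD μ A h j t := by
    intro j
    simp only [hD_eq]
    exact ((hQ_cont j).measurable.comp (hτ_meas.add_const h)).sub
      ((hQ_cont j).measurable.comp hτ_meas)
  have hD_mono : ∀ t, Monotone fun j => chatD μ A h j t := by
    intro t j j' hjj'
    simp only [hD_def]
    apply intervalIntegral.integral_mono_on (by linarith) (hq_int j _ _) (hq_int j' _ _)
    intro x _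
    exact hq_mono x hjj'
  have hD_top : ∀ t, chatD μ A h m t = h := by
    intro t
    rw [hD_def]
    rw [intervalIntegral.integral_congr (g := fun _ => (1:ℝ)) (fun x _ => hq_top x)]
    simp
  have hidx_spec : ∀ t, t - τ t < chatD μ A h (chatIdx μ A h t) t := by
    intro t
    have hne : {j | t - h * ⌊t / h⌋ < chatD μ A h j t}.Nonempty :=
      ⟨m, by rw [Set.mem_setOf_eq, hD_top, ← hτapp]; have := hτ_lt t; linarith⟩
    have h2 := Nat.sInf_mem hne
    rw [Set.mem_setOf_eq, ← hτapp] at h2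
    exact h2
  have hidx_le : ∀ t, chatIdx μ A h t ≤ m := by
    intro t
    apply Nat.sInf_le
    rw [Set.mem_setOf_eq, hD_top, ← hτapp]
    have := hτ_lt t; linarith
  have hidx_iff : ∀ t j, chatIdx μ A h t ≤ j ↔ t - τ t < chatD μ A h j t := by
    intro t j
    constructor
    · intro hj
      exact lt_of_lt_of_le (hidx_spec t) (hD_mono t hj)
    · intro hj
      apply Nat.sInf_le
      rw [Set.mem_setOf_eq, ← hτapp]
      exact hj
  have hidx_meas : Measurable (chatIdx μ A h) := by
    apply measurable_to_countable'
    intro j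
    have hle : ∀ i : ℕ, MeasurableSet {t | chatIdx μ A h t ≤ i} := by
      intro i
      have : {t | chatIdx μ A h t ≤ i} = {t | t - τ t < chatD μ A h i t} := by
        ext t; exact hidx_iff t i
      rw [this]
      exact measurableSet_lt (measurable_id.sub hτ_meas) (hD_meas i)
    cases j with
    | zero =>
      have : chatIdx μ A h ⁻¹' {0} = {t | chatIdx μ A h t ≤ 0} := by
        ext t; simp [Nat.le_zero]
      rw [this]; exact hle 0
    | succ i =>
      have : chatIdx μ A h ⁻¹' {i+1} =
          {t | chatIdx μ A h t ≤ i+1} \ {t | chatIdx μ A h t ≤ i} := by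
        ext t
        simp only [Set.mem_preimage, Set.mem_singleton_iff, Set.mem_diff, Set.mem_setOf_eq]
        omega
      rw [this]; exact (hle (i+1)).diff (hle i)
  refine ⟨fun t => a (chatIdx μ A h t), measurable_from_top.comp hidx_meas, ?_⟩
  intro φ hφ hM ε hε hmod
  obtain ⟨M, hMb⟩ := hM
  set F : ℝ → ℝ := fun t => φ (t, a (chatIdx μ A h t)) with hF
  have hF_meas : Measurable F :=
    hφ.measurable.comp (measurable_id.prodMk (measurable_from_top.comp hidx_meas))
  have hF_bdd : ∀ t, |F t| ≤ M := fun t => hMb _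
  -- kernel measurability
  let κ : ProbabilityTheory.Kernel ℝ U := ⟨μ, Measure.measurable_of_measurable_coe μ hmeas⟩
  haveI : ProbabilityTheory.IsMarkovKernel κ := ⟨fun t => hprob t⟩
  set G : ℝ → ℝ := fun t => ∫ x, φ (t, x) ∂(μ t) with hG
  have hG_meas : StronglyMeasurable G :=
    hφ.stronglyMeasurable.integral_kernel_prod_right' (κ := κ)
  set Gj : ℕ → ℝ → ℝ := fun j t => ∫ x in A j, φ (t, x) ∂(μ t) with hGj
  have hGj_meas : ∀ j, StronglyMeasurable (Gj j) := by
    intro j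
    have h1 : StronglyMeasurable fun p : ℝ × U =>
        Set.indicator ((Set.univ : Set ℝ) ×ˢ A j) φ p :=
      hφ.stronglyMeasurable.indicator (MeasurableSet.univ.prod (hAm j))
    have h2 := h1.integral_kernel_prod_right' (κ := κ)
    have h3 : ∀ t, Gj j t =
        ∫ x, Set.indicator ((Set.univ : Set ℝ) ×ˢ A j) φ (t, x) ∂(κ t) := by
      intro t
      show (∫ x in A j, φ (t, x) ∂(μ t)) = _
      rw [← integral_indicator (hAm j)]
      congr 1
      ext x
      by_cases hx : x ∈ A j <;> simp [Set.indicator, hx]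
    rw [funext h3]
    exact h2
  -- integrability helpers
  have hintM : ∀ (g : ℝ → ℝ) (s : Set ℝ), volume s < ⊤ →
      AEStronglyMeasurable g (volume.restrict s) → (∀ t, |g t| ≤ M) → IntegrableOn g s := by
    intro g s hs hg hb
    refine Integrable.mono' (g := fun _ => M) (integrableOn_const hs.ne) hg ?_
    exact Eventually.of_forall fun t => by simpa [Real.norm_eq_abs] using hb t
  have hφt_int : ∀ (t : ℝ) (s : Set U), IntegrableOn (fun x => φ (t, x)) s (μ t) := by
    intro t s
    refine Integrable.mono' (g := fun _ => M)
      (integrableOn_const (measure_lt_top (μ t) s).ne)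
      ((hφ.comp (Continuous.prodMk_right t)).aestronglyMeasurable.restrict) ?_
    exact Eventually.of_forall fun x => by simpa [Real.norm_eq_abs] using hMb (t, x)
  have hG_bdd : ∀ t, |G t| ≤ M := by
    intro t
    have hint : Integrable (fun x => φ (t, x)) (μ t) := by
      have := hφt_int t Set.univ
      rwa [IntegrableOn, Measure.restrict_univ] at this
    calc |∫ x, φ (t, x) ∂(μ t)| ≤ ∫ x, |φ (t, x)| ∂(μ t) := by
          simpa [Real.norm_eq_abs] using norm_integral_le_integral_norm (fun x => φ (t, x)) (μ := μ t)
      _ ≤ ∫ _x, M ∂(μ t) := integral_mono hint.abs (integrable_const M) fun x => hMb (t, x)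
      _ = M := by simp [(hprob t).measure_univ]
  have hGj_bdd : ∀ j t, |Gj j t| ≤ M := by
    intro j t
    have hM0 : 0 ≤ M := le_trans (abs_nonneg _) (hMb ((0:ℝ), a 0))
    have := norm_setIntegral_le_of_norm_le_const (μ := μ t) (s := A j) (C := M)
      (f := fun x => φ (t, x))
      (measure_lt_top (μ t) (A j))
      (fun x _ => by simpa [Real.norm_eq_abs] using hMb (t, x))
    rw [Real.norm_eq_abs, measureReal_def] at this
    refine le_trans this ?_
    have h1 : ((μ t) (A j)).toReal ≤ 1 := by
      rw [← ENNReal.toReal_one]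
      exact ENNReal.toReal_mono ENNReal.one_ne_top
        (by rw [← (hprob t).measure_univ]; exact measure_mono (Set.subset_univ _))
    nlinarith
  -- the time grid
  set J : ℕ → Set ℝ := fun k => Set.Ico (k*h) (k*h+h) with hJ
  have hJd : ∀ k k' : ℕ, k ≠ k' → Disjoint (J k) (J k') := by
    intro k k' hkk'
    rw [Set.disjoint_left]
    intro t ht ht'
    rw [hJ, Set.mem_Ico] at ht ht'
    rcases lt_or_gt_of_ne hkk' with hlt | hlt
    · have : (k:ℝ) + 1 ≤ k' := by exact_mod_cast hlt
      nlinarith [ht.1, ht.2, ht'.1, ht'.2]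
    · have : (k':ℝ) + 1 ≤ k := by exact_mod_cast hlt
      nlinarith [ht.1, ht.2, ht'.1, ht'.2]
  have hIco : Set.Ico (0:ℝ) T = ⋃ k ∈ Finset.range n, J k := by
    ext t
    simp only [Set.mem_Ico, Set.mem_iUnion, Finset.mem_range, hJ]
    constructor
    · rintro ⟨ht0, htT⟩
      have hfl0 : (0:ℤ) ≤ ⌊t/h⌋ := Int.floor_nonneg.2 (by positivity)
      refine ⟨⌊t/h⌋.toNat, ?_, ?_, ?_⟩
      · have h1 : h * (⌊t/h⌋:ℝ) ≤ t := by rw [← hτapp]; exact hτ_le t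
        have hnh : (n:ℝ) * h = T := by
          rw [hh]; field_simp
        have h2 : t < (n:ℝ) * h := by rw [hnh]; exact htT
        have h3 : (⌊t/h⌋:ℝ) < n := by nlinarith
        have h4 : ⌊t/h⌋ < (n:ℤ) := by exact_mod_cast h3
        omega
      · have h1 : h * (⌊t/h⌋:ℝ) ≤ t := by rw [← hτapp]; exact hτ_le t
        have h2 : ((⌊t/h⌋.toNat : ℕ) : ℝ) = ((⌊t/h⌋ : ℤ) : ℝ) := by
          exact_mod_cast congrArg Int.cast (Int.toNat_of_nonneg hfl0)
        rw [h2]; linarith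
      · have h1 : t < h * (⌊t/h⌋:ℝ) + h := by rw [← hτapp]; exact hτ_lt t
        have h2 : ((⌊t/h⌋.toNat : ℕ) : ℝ) = ((⌊t/h⌋ : ℤ) : ℝ) := by
          exact_mod_cast congrArg Int.cast (Int.toNat_of_nonneg hfl0)
        rw [h2]; linarith
    · rintro ⟨k, hk, h1, h2⟩
      have hk' : (k:ℝ) + 1 ≤ n := by exact_mod_cast hk
      have hnh : (n:ℝ) * h = T := by
        rw [hh]; field_simp
      constructor
      · have : (0:ℝ) ≤ (k:ℝ) * h := by positivity
        linarith
      · nlinarith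
  have hJsub : ∀ k, k ∈ Finset.range n → J k ⊆ Set.Icc 0 T := by
    intro k hk t ht
    rw [hJ, Set.mem_Ico] at ht
    rw [Finset.mem_range] at hk
    have hk' : (k:ℝ) + 1 ≤ n := by exact_mod_cast hk
    have hnh : (n:ℝ) * h = T := by rw [hh]; field_simp
    constructor
    · have : (0:ℝ) ≤ (k:ℝ) * h := by positivity
      linarith [ht.1]
    · nlinarith [ht.2]
  have hsplit : ∀ (g : ℝ → ℝ), AEStronglyMeasurable g volume → (∀ t, |g t| ≤ M) →
      ∫ t in Set.Icc (0:ℝ) T, g t = ∑ k ∈ Finset.range n, ∫ t in J k, g t := by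
    intro g hg hb
    rw [← setIntegral_congr_set Ico_ae_eq_Icc, hIco]
    exact integral_biUnion_finset (Finset.range n) (fun k _ => measurableSet_Ico)
      (fun k _ k' _ hkk' => hJd k k' hkk')
      (fun k _ => hintM g (J k) measure_Ico_lt_top hg.restrict hb)
  -- the per-interval estimate
  have hion : ∀ (g : ℝ → ℝ), Measurable g → (∀ t, |g t| ≤ 1) →
      ∀ s : Set ℝ, volume s < ⊤ → IntegrableOn g s := by
    intro g hg hb s hs
    refine Integrable.mono' (g := fun _ => (1:ℝ)) (integrableOn_const hs.ne)
      hg.aestronglyMeasurable.restrict ?_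
    exact Eventually.of_forall fun t => by simpa [Real.norm_eq_abs] using hb t
  have hp_le_one : ∀ j t, |(μ t (A j)).toReal| ≤ 1 := by
    intro j t
    rw [abs_of_nonneg (hp_nonneg j t), ← ENNReal.toReal_one]
    exact ENNReal.toReal_mono ENNReal.one_ne_top
      (by rw [← (hprob t).measure_univ]; exact measure_mono (Set.subset_univ _))
  have hk_bound : ∀ k ∈ Finset.range n,
      |(∫ t in J k, F t) - ∫ t in J k, G t| ≤ 2 * ε * h := by
    intro k hk
    rw [Finset.mem_range] at hk
    set tk : ℝ := k * h with htk
    have hJIco : J k = Set.Ico tk (tk + h) := rfl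
    have hJk_meas : MeasurableSet (J k) := by rw [hJIco]; exact measurableSet_Ico
    have hJk_fin : volume (J k) < ⊤ := by rw [hJIco]; exact measure_Ico_lt_top
    have htk_mem : tk ∈ Set.Icc (0:ℝ) T := by
      constructor
      · rw [htk]; positivity
      · have hk' : (k:ℝ) + 1 ≤ n := by exact_mod_cast hk
        have hnh : (n:ℝ) * h = T := by rw [hh]; field_simp
        rw [htk]; nlinarith
    have hJIcc : J k ⊆ Set.Icc 0 T := hJsub k (Finset.mem_range.2 hk)
    have hτk : ∀ t ∈ J k, τ t = tk := by
      intro t ht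
      rw [hJIco, Set.mem_Ico] at ht
      rw [hτapp]
      have hfl : ⌊t / h⌋ = (k:ℤ) := by
        rw [Int.floor_eq_iff]
        constructor
        · rw [le_div_iff₀ hhpos]
          push_cast
          linarith [ht.1]
        · rw [div_lt_iff₀ hhpos]
          push_cast
          linarith [ht.2]
      rw [hfl, htk]
      push_cast
      ring
    have hDk : ∀ j, ∀ t ∈ J k, chatD μ A h j t = ∫ s in tk..(tk+h), chatQ μ A j s := by
      intro j t ht
      rw [hD_def, hτk t ht]
    set d : ℕ → ℝ := fun j => ∫ s in tk..(tk+h), chatQ μ A j s with hd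
    have hd_mono : Monotone d := fun j j' hjj' =>
      intervalIntegral.integral_mono_on (by linarith) (hq_int _ _ _) (hq_int _ _ _)
        (fun x _ => hq_mono x hjj')
    have hd_nonneg : ∀ j, 0 ≤ d j := fun j =>
      intervalIntegral.integral_nonneg (by linarith) (fun x _ => hq_nonneg j x)
    have hd_le : ∀ j, d j ≤ h := by
      intro j
      have h1 : d j ≤ ∫ s in tk..(tk+h), (1:ℝ) :=
        intervalIntegral.integral_mono_on (by linarith) (hq_int _ _ _)
          intervalIntegrable_const (fun x _ => hq_le_one j x)
      simpa using h1
    have hSle : ∀ j, J k ∩ {t | chatIdx μ A h t ≤ j} = Set.Ico tk (tk + d j) := by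
      intro j
      ext t
      simp only [Set.mem_inter_iff, Set.mem_setOf_eq, hJIco, Set.mem_Ico]
      constructor
      · rintro ⟨⟨h1, h2⟩, h3⟩
        have htJ : t ∈ J k := by rw [hJIco, Set.mem_Ico]; exact ⟨h1, h2⟩
        rw [hidx_iff, hDk j t htJ, hτk t htJ] at h3
        exact ⟨h1, by linarith⟩
      · rintro ⟨h1, h2⟩
        have htJ : t ∈ J k := by
          rw [hJIco, Set.mem_Ico]
          exact ⟨h1, lt_of_lt_of_le h2 (by linarith [hd_le j])⟩
        have htJ' := htJ
        rw [hJIco, Set.mem_Ico] at htJ'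
        refine ⟨⟨htJ'.1, htJ'.2⟩, ?_⟩
        rw [hidx_iff, hDk j t htJ, hτk t htJ]
        linarith
    set S : ℕ → Set ℝ := fun j => {t | chatIdx μ A h t = j} with hS
    have hS_meas : ∀ j, MeasurableSet (S j) := by
      intro j
      have : S j = chatIdx μ A h ⁻¹' {j} := rfl
      rw [this]
      exact hidx_meas (measurableSet_singleton j)
    have hIcoIoc : ∀ j, ∫ t in J k, chatQ μ A j t = d j := by
      intro j
      rw [hJIco, integral_Ico_eq_integral_Ioo, ← integral_Ioc_eq_integral_Ioo,
        ← intervalIntegral.integral_of_le (by linarith : tk ≤ tk + h)]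
    have hw0 : ∫ t in J k, (μ t (A 0)).toReal = d 0 := by
      have h1 : (fun t => (μ t (A 0)).toReal) = chatQ μ A 0 := by
        funext t
        simp [chatQ, Finset.sum_range_one]
      rw [h1, hIcoIoc 0]
    have hwS : ∀ j, ∫ t in J k, (μ t (A (j+1))).toReal = d (j+1) - d j := by
      intro j
      have h1 : ∀ t, (μ t (A (j+1))).toReal = chatQ μ A (j+1) t - chatQ μ A j t := by
        intro t
        simp [chatQ, Finset.sum_range_succ]
      rw [setIntegral_congr_fun hJk_meas (fun t _ => h1 t),
        integral_sub (hion _ (hq_meas (j+1))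
            (fun t => abs_le.2 ⟨by linarith [hq_nonneg (j+1) t], hq_le_one (j+1) t⟩) _ hJk_fin)
          (hion _ (hq_meas j)
            (fun t => abs_le.2 ⟨by linarith [hq_nonneg j t], hq_le_one j t⟩) _ hJk_fin),
        hIcoIoc, hIcoIoc]
    have hvol : ∀ j, (volume (J k ∩ S j)).toReal = ∫ t in J k, (μ t (A j)).toReal := by
      intro j
      cases j with
      | zero =>
        have hSeq : J k ∩ S 0 = Set.Ico tk (tk + d 0) := by
          rw [← hSle 0]
          congr 1
          ext t
          simp [hS, Nat.le_zero]
        rw [hSeq, Real.volume_Ico, ENNReal.toReal_ofReal (by linarith [hd_nonneg 0]), hw0]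
        ring
      | succ j =>
        have e1 : S (j+1) = {t | chatIdx μ A h t ≤ j+1} \ {t | chatIdx μ A h t ≤ j} := by
          ext t
          simp only [hS, Set.mem_setOf_eq, Set.mem_diff]
          omega
        have hSeq : J k ∩ S (j+1) = Set.Ico (tk + d j) (tk + d (j+1)) := by
          rw [e1, Set.inter_diff_distrib_left, hSle (j+1), hSle j]
          ext t
          simp only [Set.mem_diff, Set.mem_Ico]
          constructor
          · rintro ⟨⟨h1, h2⟩, h3⟩
            refine ⟨?_, h2⟩
            by_contra hcon
            push_neg at hcon
            exact h3 ⟨h1, by linarith⟩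
          · rintro ⟨h1, h2⟩
            have hdj := hd_nonneg j
            exact ⟨⟨by linarith, h2⟩, fun hc => by linarith [hc.2]⟩
        rw [hSeq, Real.volume_Ico,
          ENNReal.toReal_ofReal (by linarith [hd_mono (Nat.le_succ j)]), hwS j]
        ring
    have hwsum : ∑ j ∈ Finset.range (m+1), ∫ t in J k, (μ t (A j)).toReal = h := by
      rw [← integral_finset_sum _ (fun j _ => hion _ (hp_meas j) (hp_le_one j) _ hJk_fin)]
      have h1 : ∀ t, ∑ j ∈ Finset.range (m+1), (μ t (A j)).toReal = chatQ μ A m t :=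
        fun t => rfl
      rw [setIntegral_congr_fun hJk_meas (fun t _ => h1 t), hIcoIoc m]
      show (∫ s in tk..(tk+h), chatQ μ A m s) = h
      rw [intervalIntegral.integral_congr (g := fun _ => (1:ℝ)) (fun x _ => hq_top x)]
      simp
    have hJdecomp : J k = ⋃ j ∈ Finset.range (m+1), (J k ∩ S j) := by
      ext t
      simp only [Set.mem_iUnion, Finset.mem_range, Set.mem_inter_iff, hS, Set.mem_setOf_eq]
      constructor
      · intro ht
        exact ⟨chatIdx μ A h t, Nat.lt_succ_of_le (hidx_le t), ht, rfl⟩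
      · rintro ⟨j, _, ht, _⟩
        exact ht
    have hFsplit : ∫ t in J k, F t = ∑ j ∈ Finset.range (m+1), ∫ t in J k ∩ S j, F t := by
      conv_lhs => rw [hJdecomp]
      exact integral_biUnion_finset _ (fun j _ => hJk_meas.inter (hS_meas j))
        (fun j _ j' _ hjj' => Set.disjoint_of_subset Set.inter_subset_right
          Set.inter_subset_right (by
            rw [Set.disjoint_left]
            intro t ht ht'
            rw [hS, Set.mem_setOf_eq] at ht ht'
            exact hjj' (ht ▸ ht')))
        (fun j _ => hintM F _ (lt_of_le_of_lt (measure_mono Set.inter_subset_left) hJk_fin)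
          hF_meas.aestronglyMeasurable.restrict hF_bdd)
    have hGsplit : ∫ t in J k, G t = ∑ j ∈ Finset.range (m+1), ∫ t in J k, Gj j t := by
      have hGt : ∀ t, G t = ∑ j ∈ Finset.range (m+1), Gj j t := by
        intro t
        show (∫ x, φ (t, x) ∂(μ t)) = _
        rw [← Measure.restrict_univ (μ := μ t), ← hAc,
          integral_biUnion_finset _ (fun i _ => hAm i) (fun i _ i' _ hii' => hAd hii')
            (fun i _ => hφt_int t (A i))]
      rw [setIntegral_congr_fun hJk_meas (fun t _ => hGt t)]
      exact integral_finset_sum _ (fun j _ => hintM (Gj j) (J k) hJk_fin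
        (hGj_meas j).aestronglyMeasurable.restrict (hGj_bdd j))
    have habs : ∀ t ∈ J k, |t - tk| ≤ T / n := by
      intro t ht
      rw [hJIco, Set.mem_Ico] at ht
      rw [abs_le, ← hh]
      constructor <;> [linarith [ht.1, hhpos]; linarith [ht.2]]
    have hclaim1 : ∀ j ∈ Finset.range (m+1),
        |(∫ t in J k ∩ S j, F t) - φ (tk, a j) * (volume (J k ∩ S j)).toReal| ≤
          ε * (volume (J k ∩ S j)).toReal := by
      intro j _
      have hmeas_s : MeasurableSet (J k ∩ S j) := hJk_meas.inter (hS_meas j)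
      have hfin : volume (J k ∩ S j) < ⊤ :=
        lt_of_le_of_lt (measure_mono Set.inter_subset_left) hJk_fin
      have hconst : φ (tk, a j) * (volume (J k ∩ S j)).toReal =
          ∫ _t in J k ∩ S j, φ (tk, a j) := by
        rw [setIntegral_const, smul_eq_mul, measureReal_def]
        ring
      rw [hconst, ← integral_sub
        (hintM F _ hfin hF_meas.aestronglyMeasurable.restrict hF_bdd)
        (integrableOn_const hfin.ne)]
      have hb := norm_setIntegral_le_of_norm_le_const (μ := volume) (s := J k ∩ S j) (C := ε)
        (f := fun t => F t - φ (tk, a j))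
        hfin (fun t ht => ?_)
      · simpa [Real.norm_eq_abs, measureReal_def] using hb
      · rw [Real.norm_eq_abs]
        show |F t - φ (tk, a j)| ≤ ε
        have hidx_t : chatIdx μ A h t = j := ht.2
        have hFt : F t = φ (t, a j) := by
          show φ (t, a (chatIdx μ A h t)) = _
          rw [hidx_t]
        rw [hFt]
        exact hmod t tk (hJIcc ht.1) htk_mem (a j) (a j) (habs t ht.1) (by simp [hr])
    have hclaim2 : ∀ j ∈ Finset.range (m+1),
        |(∫ t in J k, Gj j t) - φ (tk, a j) * ∫ t in J k, (μ t (A j)).toReal| ≤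
          ε * ∫ t in J k, (μ t (A j)).toReal := by
      intro j _
      have hpt : ∀ t ∈ J k, |Gj j t - φ (tk, a j) * (μ t (A j)).toReal| ≤
          ε * (μ t (A j)).toReal := by
        intro t ht
        have hconst : φ (tk, a j) * ((μ t) (A j)).toReal =
            ∫ _x in A j, φ (tk, a j) ∂(μ t) := by
          rw [setIntegral_const, smul_eq_mul, measureReal_def]
          ring
        have hGjt : Gj j t = ∫ x in A j, φ (t, x) ∂(μ t) := rfl
        rw [hGjt, hconst, ← integral_sub (hφt_int t (A j))
          (integrableOn_const (measure_ne_top _ _))]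
        have hb := norm_setIntegral_le_of_norm_le_const (μ := μ t) (s := A j) (C := ε)
          (f := fun x => φ (t, x) - φ (tk, a j))
          (measure_lt_top _ _) (fun x hx => ?_)
        · simpa [Real.norm_eq_abs, measureReal_def] using hb
        · rw [Real.norm_eq_abs]
          show |φ (t, x) - φ (tk, a j)| ≤ ε
          exact hmod t tk (hJIcc ht) htk_mem x (a j) (habs t ht)
            (by have := hAr j hx; rwa [Metric.mem_closedBall] at this)
      have hint1 : IntegrableOn (Gj j) (J k) :=
        hintM (Gj j) (J k) hJk_fin (hGj_meas j).aestronglyMeasurable.restrict (hGj_bdd j)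
      have hint2 : IntegrableOn (fun t => φ (tk, a j) * (μ t (A j)).toReal) (J k) :=
        ((hion _ (hp_meas j) (hp_le_one j) _ hJk_fin)).const_mul _
      have hint3 : IntegrableOn (fun t => ε * (μ t (A j)).toReal) (J k) :=
        ((hion _ (hp_meas j) (hp_le_one j) _ hJk_fin)).const_mul _
      have h1 : |∫ t in J k, (Gj j t - φ (tk, a j) * (μ t (A j)).toReal)| ≤
          ∫ t in J k, ε * (μ t (A j)).toReal := by
        have := norm_integral_le_of_norm_le (f := fun t => Gj j t - φ (tk, a j) * (μ t (A j)).toReal) hint3 ?_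
        · simpa [Real.norm_eq_abs] using this
        · rw [ae_restrict_iff' hJk_meas]
          exact Eventually.of_forall fun t ht => by
            rw [Real.norm_eq_abs]; exact hpt t ht
      rw [integral_sub hint1 hint2, integral_const_mul, integral_const_mul] at h1
      exact h1
    rw [hFsplit, hGsplit, ← Finset.sum_sub_distrib]
    calc |∑ j ∈ Finset.range (m+1), ((∫ t in J k ∩ S j, F t) - ∫ t in J k, Gj j t)|
        ≤ ∑ j ∈ Finset.range (m+1), |(∫ t in J k ∩ S j, F t) - ∫ t in J k, Gj j t| :=
          Finset.abs_sum_le_sum_abs _ _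
      _ ≤ ∑ j ∈ Finset.range (m+1), 2 * ε * ∫ t in J k, (μ t (A j)).toReal := by
          apply Finset.sum_le_sum
          intro j hj
          have e1 := hclaim1 j hj
          have e2 := hclaim2 j hj
          rw [hvol j] at e1
          calc |(∫ t in J k ∩ S j, F t) - ∫ t in J k, Gj j t|
              ≤ |(∫ t in J k ∩ S j, F t) - φ (tk, a j) * ∫ t in J k, (μ t (A j)).toReal| +
                |φ (tk, a j) * (∫ t in J k, (μ t (A j)).toReal) - ∫ t in J k, Gj j t| :=
                abs_sub_le _ _ _
            _ ≤ ε * (∫ t in J k, (μ t (A j)).toReal) + ε * ∫ t in J k, (μ t (A j)).toReal := by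
                rw [abs_sub_comm (φ (tk, a j) * _)]
                exact add_le_add e1 e2
            _ = 2 * ε * ∫ t in J k, (μ t (A j)).toReal := by ring
      _ = 2 * ε * h := by rw [← Finset.mul_sum, hwsum]
  show |(∫ t in Set.Icc (0:ℝ) T, F t) - ∫ t in Set.Icc (0:ℝ) T, G t| ≤ 3*T*ε
  rw [hsplit F hF_meas.aestronglyMeasurable hF_bdd,
    hsplit G hG_meas.aestronglyMeasurable hG_bdd, ← Finset.sum_sub_distrib]
  calc |∑ k ∈ Finset.range n, ((∫ t in J k, F t) - ∫ t in J k, G t)|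
      ≤ ∑ k ∈ Finset.range n, |(∫ t in J k, F t) - ∫ t in J k, G t| :=
        Finset.abs_sum_le_sum_abs _ _
    _ ≤ ∑ _k ∈ Finset.range n, 2 * ε * h := Finset.sum_le_sum hk_bound
    _ = n * (2 * ε * h) := by rw [Finset.sum_const, Finset.card_range, nsmul_eq_mul]
    _ = 2 * ε * T := by
        rw [hh]
        have : (n:ℝ) ≠ 0 := Nat.cast_ne_zero.2 hn.ne'
        field_simp
    _ ≤ 3 * T * ε := by nlinarith

/-- chattering lemma, deterministic version: every measurable family
`(μ_t)` of probability measures on a compact metric space `U` is the weak limit of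
Dirac measures of measurable strict controls: there exist measurable `uₙ : [0,T] → U`
with `∫₀ᵀ φ(t, uₙ(t)) dt → ∫₀ᵀ ∫_U φ(t,a) μ_t(da) dt` for all bounded continuous `φ`. -/
theorem chattering_lemma {U : Type*} [MetricSpace U] [CompactSpace U]
    [MeasurableSpace U] [BorelSpace U] (T : ℝ) (hT : 0 < T)
    (μ : ℝ → Measure U) (hprob : ∀ t, IsProbabilityMeasure (μ t))
    (hmeas : ∀ A : Set U, MeasurableSet A → Measurable fun t => μ t A) :
    ∃ u : ℕ → ℝ → U, (∀ n, Measurable (u n)) ∧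
      ∀ φ : ℝ × U → ℝ, Continuous φ → (∃ M, ∀ p, |φ p| ≤ M) →
        Tendsto (fun n => ∫ t in Set.Icc (0:ℝ) T, φ (t, u n t)) atTop
          (𝓝 (∫ t in Set.Icc (0:ℝ) T, ∫ a, φ (t, a) ∂(μ t))) := by
  classical
  -- `U` is nonempty
  have hne : Nonempty U := by
    by_contra h
    rw [not_nonempty_iff] at h
    have h1 := (hprob 0).measure_univ
    rw [Set.univ_eq_empty_iff.2 h, measure_empty] at h1
    exact zero_ne_one h1
  inhabit U
  -- for each n, construct a control
  have H : ∀ n : ℕ, ∃ u : ℝ → U, Measurable u ∧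
      ∀ (φ : ℝ × U → ℝ), Continuous φ → (∃ M, ∀ p, |φ p| ≤ M) →
      ∀ ε : ℝ, 0 ≤ ε →
      (∀ s t : ℝ, s ∈ Set.Icc 0 T → t ∈ Set.Icc 0 T → ∀ x y : U,
          |s - t| ≤ T/(n+1) → dist x y ≤ 1/(n+1) → |φ (s,x) - φ (t,y)| ≤ ε) →
      |(∫ t in Set.Icc (0:ℝ) T, φ (t, u t)) -
        ∫ t in Set.Icc (0:ℝ) T, ∫ x, φ (t,x) ∂(μ t)| ≤ 3*T*ε := by
    intro n
    have hrpos : (0:ℝ) < 1/(n+1) := by positivity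
    obtain ⟨s, -, hsfin, hscov⟩ := (isCompact_univ : IsCompact (Set.univ : Set U)).finite_cover_balls hrpos
    -- enumerate the (nonempty) finite set `s`
    have hsne : s.Nonempty := by
      rcases Set.eq_empty_or_nonempty s with rfl | h
      · exfalso
        have := hscov (Set.mem_univ (default : U))
        simpa using this
      · exact h
    set l := hsfin.toFinset.toList with hl
    have hlne : l ≠ [] := by
      simp only [hl, ne_eq, Finset.toList_eq_nil, ← Finset.nonempty_iff_ne_empty]
      rw [Set.Finite.toFinset_nonempty]
      exact hsne
    set e : ℕ → U := fun i => l.getD i default with he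
    set B : ℕ → Set U := fun i => Metric.ball (e i) (1/(n+1)) with hB
    have hBcov : (⋃ i ∈ Finset.range l.length, B i) = Set.univ := by
      apply Set.eq_univ_of_univ_subset
      intro x hx
      obtain ⟨y, hy, hxy⟩ := Set.mem_iUnion₂.1 (hscov hx)
      have hyl : y ∈ l := by
        simp only [hl, Finset.mem_toList, Set.Finite.mem_toFinset]
        exact hy
      obtain ⟨⟨i, hi⟩, rfl⟩ := List.mem_iff_get.1 hyl
      have hei : e i = l.get ⟨i, hi⟩ := by
        simp [he, List.getD_eq_getElem?_getD, List.getElem?_eq_getElem hi]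
      refine Set.mem_biUnion (Finset.mem_range.2 hi) ?_
      rw [hB]
      simpa [hei] using hxy
    have hpart : ∀ (f : ℕ → Set U) (N : ℕ),
        (⋃ i ∈ Finset.range N, disjointed f i) = ⋃ i ∈ Finset.range N, f i := by
      intro f N
      induction N with
      | zero => simp
      | succ N ih =>
        rw [Finset.range_add_one, Finset.set_biUnion_insert, Finset.set_biUnion_insert, ih]
        apply Set.Subset.antisymm
        · exact Set.union_subset_union_left _ (disjointed_subset f N)
        · intro x hx
          rcases hx with hx | hx
          · by_cases hx' : x ∈ ⋃ i ∈ Finset.range N, f i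
            · exact Or.inr hx'
            · left
              cases N with
              | zero => simpa [disjointed_zero] using hx
              | succ k =>
                rw [← Order.succ_eq_add_one, disjointed_succ _ (not_isMax k)]
                refine ⟨hx, ?_⟩
                rw [partialSups_eq_biSup]
                simp only [Set.iSup_eq_iUnion]
                intro hmem
                apply hx'
                simp only [Set.mem_iUnion, Finset.mem_range] at hmem ⊢
                obtain ⟨j, hj, hxj⟩ := hmem
                exact ⟨j, by omega, hxj⟩
          · exact Or.inr hx
    have hlpos : 0 < l.length := List.length_pos_iff.2 hlne
    obtain ⟨u, hu, hest⟩ := chattering_aux T hT μ hprob hmeas e (disjointed B)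
      (l.length - 1)
      (fun j => MeasurableSet.disjointed (fun i => measurableSet_ball) j)
      (disjoint_disjointed B)
      (by rw [Nat.sub_add_cancel hlpos, hpart]; exact hBcov)
      (1/(n+1)) (le_of_lt hrpos)
      (fun j => (disjointed_subset B j).trans Metric.ball_subset_closedBall)
      (n+1) (Nat.succ_pos n)
    refine ⟨u, hu, ?_⟩
    intro φ hφ hbdd ε hε hmod
    refine hest φ hφ hbdd ε hε ?_
    intro s t hs ht x y hst hxy
    refine hmod s t hs ht x y ?_ ?_
    · push_cast at hst ⊢; exact hst
    · push_cast at hxy ⊢; exact hxy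
  choose u hu₁ hu₂ using H
  refine ⟨u, hu₁, ?_⟩
  intro φ hφ hbdd
  rw [Metric.tendsto_atTop]
  intro ε hε
  -- uniform continuity on the compact set `Icc 0 T ×ˢ univ`
  set K : Set (ℝ × U) := Set.Icc (0:ℝ) T ×ˢ (Set.univ : Set U) with hK
  have hKcomp : IsCompact K := isCompact_Icc.prod isCompact_univ
  have hUC := hKcomp.uniformContinuousOn_of_continuous hφ.continuousOn
  rw [Metric.uniformContinuousOn_iff] at hUC
  have hε' : 0 < ε / (6 * T + 6) := by positivity
  obtain ⟨δ, hδ, hδ'⟩ := hUC (ε / (6 * T + 6)) hε'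
  obtain ⟨N, hN⟩ := exists_nat_gt ((T + 1) / δ)
  refine ⟨N, fun n hnN => ?_⟩
  have hNp : (T + 1) / ((N:ℝ) + 1) < δ := by
    rw [div_lt_iff₀ (by positivity)]
    rw [div_lt_iff₀ hδ] at hN
    nlinarith [hδ.le]
  have hkey := hu₂ n φ hφ hbdd (ε / (6 * T + 6)) hε'.le ?_
  · rw [Real.dist_eq]
    calc |(∫ t in Set.Icc (0:ℝ) T, φ (t, u n t)) -
        ∫ t in Set.Icc (0:ℝ) T, ∫ x, φ (t,x) ∂(μ t)| ≤ 3 * T * (ε / (6 * T + 6)) := hkey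
      _ = (3 * T * ε) / (6 * T + 6) := by ring
      _ < ε := by
        rw [div_lt_iff₀ (by positivity : (0:ℝ) < 6 * T + 6)]
        nlinarith
  · intro s t hs ht x y hst hxy
    have h1 : dist (s, x) (t, y) < δ := by
      rw [Prod.dist_eq]
      have hTn : T / ((n:ℝ) + 1) < δ := by
        calc T / ((n:ℝ) + 1) ≤ (T + 1) / ((N:ℝ) + 1) := by
              apply div_le_div₀ (by linarith) (by linarith) (by positivity)
              push_cast; exact_mod_cast by exact_mod_cast Nat.succ_le_succ hnN
          _ < δ := hNp
      have h1n : 1 / ((n:ℝ) + 1) < δ := by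
        calc 1 / ((n:ℝ) + 1) ≤ (T + 1) / ((N:ℝ) + 1) := by
              apply div_le_div₀ (by linarith) (by linarith) (by positivity)
              exact_mod_cast Nat.succ_le_succ hnN
          _ < δ := hNp
      apply max_lt
      · rw [Real.dist_eq]; exact lt_of_le_of_lt hst hTn
      · exact lt_of_le_of_lt hxy h1n
    have h2 := hδ' (s, x) (by exact ⟨hs, Set.mem_univ x⟩) (t, y) ⟨ht, Set.mem_univ y⟩ h1
    rw [Real.dist_eq] at h2
    exact h2.le
end

section
/- Let U be a compact metric space, f : [0,T] × ℝ^d × U → ℝ continuous and bounded, and suppose xₙ : [0,T] → ℝ^d converge uniformly to x : [0,T] → ℝ^d, and the measures δ_{uₙ(t)}dt converge weakly on [0,T] × U to μ_t(da)dt. Then ∫₀ᵀ f(t, xₙ(t), uₙ(t)) dt → ∫₀ᵀ ∫_U f(t, x(t), a) μ_t(da) dt. -/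
open MeasureTheory Filter Topology

/-- stability of the running cost: if `f` is bounded continuous,
`xₙ → x` uniformly on `[0,T]` and `δ_{uₙ(t)}dt → μ_t(da)dt` weakly, then
`∫₀ᵀ f(t, xₙ(t), uₙ(t)) dt → ∫₀ᵀ ∫_U f(t, x(t), a) μ_t(da) dt`. -/
theorem running_cost_stability {U : Type*} [MetricSpace U] [CompactSpace U]
    [MeasurableSpace U] [BorelSpace U] (T : ℝ) (hT : 0 < T) (d : ℕ)
    (f : ℝ × (EuclideanSpace ℝ (Fin d)) × U → ℝ)
    (hfc : Continuous f) (hfb : ∃ M, ∀ p, |f p| ≤ M)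
    (x : ℕ → ℝ → EuclideanSpace ℝ (Fin d)) (xlim : ℝ → EuclideanSpace ℝ (Fin d))
    (hxc : ∀ n, Continuous (x n)) (hxlimc : Continuous xlim)
    (hunif : TendstoUniformlyOn x xlim atTop (Set.Icc (0:ℝ) T))
    (u : ℕ → ℝ → U) (hu : ∀ n, Measurable (u n))
    (μ : ℝ → Measure U) (hprob : ∀ t, IsProbabilityMeasure (μ t))
    (hmeas : ∀ A : Set U, MeasurableSet A → Measurable fun t => μ t A)
    (hweak : ∀ φ : ℝ × U → ℝ, Continuous φ → (∃ M, ∀ p, |φ p| ≤ M) →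
      Tendsto (fun n => ∫ t in Set.Icc (0:ℝ) T, φ (t, u n t)) atTop
        (𝓝 (∫ t in Set.Icc (0:ℝ) T, ∫ a, φ (t, a) ∂(μ t)))) :
    Tendsto (fun n => ∫ t in Set.Icc (0:ℝ) T, f (t, x n t, u n t)) atTop
      (𝓝 (∫ t in Set.Icc (0:ℝ) T, ∫ a, f (t, xlim t, a) ∂(μ t))) := by
  obtain ⟨M, hM⟩ := hfb
  have hsm : MeasurableSet (Set.Icc (0:ℝ) T) := measurableSet_Icc
  have hvol : (volume (Set.Icc (0:ℝ) T)).toReal = T := by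
    rw [Real.volume_Icc]; simp [hT.le]
  have hfin : volume (Set.Icc (0:ℝ) T) < ⊤ := by
    rw [Real.volume_Icc]; exact ENNReal.ofReal_lt_top
  have hint : ∀ (y : ℝ → EuclideanSpace ℝ (Fin d)), Continuous y → ∀ n : ℕ,
      Integrable (fun t => f (t, y t, u n t)) (volume.restrict (Set.Icc (0:ℝ) T)) := by
    intro y hy n
    have hmeas' : Measurable fun t => f (t, y t, u n t) :=
      hfc.measurable.comp (measurable_id.prodMk ((hy.measurable).prodMk (hu n)))
    have : IsFiniteMeasure (volume.restrict (Set.Icc (0:ℝ) T)) := by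
      constructor
      rwa [Measure.restrict_apply_univ]
    exact (integrable_const M).mono' hmeas'.aestronglyMeasurable
      (Filter.Eventually.of_forall fun t => by simpa [Real.norm_eq_abs] using hM (t, y t, u n t))
  have h1 : Tendsto (fun n => ∫ t in Set.Icc (0:ℝ) T, f (t, xlim t, u n t)) atTop
      (𝓝 (∫ t in Set.Icc (0:ℝ) T, ∫ a, f (t, xlim t, a) ∂(μ t))) := by
    exact hweak (fun p => f (p.1, xlim p.1, p.2))
      (hfc.comp (continuous_fst.prodMk ((hxlimc.comp continuous_fst).prodMk continuous_snd)))
      ⟨M, fun p => hM _⟩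
  have h2 : Tendsto (fun n => (∫ t in Set.Icc (0:ℝ) T, f (t, x n t, u n t))
      - ∫ t in Set.Icc (0:ℝ) T, f (t, xlim t, u n t)) atTop (𝓝 0) := by
    rw [NormedAddCommGroup.tendsto_nhds_zero]
    intro ε hε
    -- compact sets
    have hK : IsCompact (Metric.cthickening 1 (xlim '' Set.Icc (0:ℝ) T)) :=
      (isCompact_Icc.image hxlimc).cthickening
    set K := Metric.cthickening 1 (xlim '' Set.Icc (0:ℝ) T) with hKdef
    have hS : IsCompact ((Set.Icc (0:ℝ) T) ×ˢ (K ×ˢ (Set.univ : Set U))) :=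
      isCompact_Icc.prod (hK.prod isCompact_univ)
    have hUC : UniformContinuousOn f ((Set.Icc (0:ℝ) T) ×ˢ (K ×ˢ (Set.univ : Set U))) :=
      hS.uniformContinuousOn_of_continuous hfc.continuousOn
    set ε' : ℝ := ε / (T + 1) with hε'def
    have hε' : 0 < ε' := by positivity
    obtain ⟨δ, hδ, hδ'⟩ := Metric.uniformContinuousOn_iff.mp hUC ε' hε'
    have hev := Metric.tendstoUniformlyOn_iff.mp hunif (min δ 1) (by positivity)
    filter_upwards [hev] with n hn
    have hbound : ∀ t ∈ Set.Icc (0:ℝ) T,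
        ‖f (t, x n t, u n t) - f (t, xlim t, u n t)‖ ≤ ε' := by
      intro t ht
      have hdt : dist (xlim t) (x n t) < min δ 1 := hn t ht
      have hxK : x n t ∈ K := by
        apply Metric.mem_cthickening_of_dist_le (x n t) (xlim t) 1 (xlim '' Set.Icc (0:ℝ) T) ⟨t, ht, rfl⟩
        rw [dist_comm]
        exact le_trans hdt.le (min_le_right _ _)
      have hxlimK : xlim t ∈ K :=
        Metric.self_subset_cthickening (xlim '' Set.Icc (0:ℝ) T) ⟨t, ht, rfl⟩
      have hp : (t, x n t, u n t) ∈ (Set.Icc (0:ℝ) T) ×ˢ (K ×ˢ (Set.univ : Set U)) :=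
        ⟨ht, hxK, trivial⟩
      have hq : (t, xlim t, u n t) ∈ (Set.Icc (0:ℝ) T) ×ˢ (K ×ˢ (Set.univ : Set U)) :=
        ⟨ht, hxlimK, trivial⟩
      have hdist : dist ((t, x n t, u n t) : ℝ × (EuclideanSpace ℝ (Fin d)) × U)
          (t, xlim t, u n t) < δ := by
        have h1 : dist (x n t) (xlim t) < δ := by
          rw [dist_comm]; exact lt_of_lt_of_le hdt (min_le_left _ _)
        rw [Prod.dist_eq, Prod.dist_eq]
        exact max_lt (by simpa using hδ) (max_lt h1 (by simpa using hδ))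
      have := hδ' _ hp _ hq hdist
      rw [Real.dist_eq] at this
      exact le_of_lt (by simpa [Real.norm_eq_abs] using this)
    rw [← integral_sub (hint (x n) (hxc n) n) (hint xlim hxlimc n)]
    have hle : ‖∫ t in Set.Icc (0:ℝ) T, (f (t, x n t, u n t) - f (t, xlim t, u n t))‖
        ≤ ε' * (volume (Set.Icc (0:ℝ) T)).toReal :=
      norm_setIntegral_le_of_norm_le_const hfin hbound
    rw [hvol] at hle
    refine lt_of_le_of_lt hle ?_
    rw [hε'def]
    rw [div_mul_eq_mul_div, div_lt_iff₀ (by positivity)]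
    nlinarith
  have := h2.add h1
  simpa using this
end

section
/- Let Ê[·] = sup_{P ∈ P} E^{P}[·] be a sublinear expectation from a family P of probability measures, and ξₙ, ξ bounded measurable with Ê[|ξₙ − ξ|] → 0 (convergence in sublinear L¹). Then there exists a subsequence (ξ_{n_k}) converging to ξ quasi-surely, i.e., outside a set A with sup_{P ∈ P} P(A) = 0. -/
open MeasureTheory Filter Topology
open scoped ENNReal NNReal

set_option maxHeartbeats 1000000 in
/-- convergence in the sublinear `L¹` norm
`Ê[|ξₙ − ξ|] = sup_{P ∈ Pfam} E^P[|ξₙ − ξ|] → 0` implies quasi-sure convergence of a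
subsequence: some subsequence converges pointwise outside a polar set. -/
theorem sublinear_L1_implies_qs_subsequence {Ω : Type*} [MeasurableSpace Ω]
    (Pfam : Set (Measure Ω)) (hne : Pfam.Nonempty)
    (hprob : ∀ P ∈ Pfam, IsProbabilityMeasure P)
    (ξ : ℕ → Ω → ℝ) (ξlim : Ω → ℝ)
    (hmeas : ∀ n, Measurable (ξ n)) (hmeaslim : Measurable ξlim)
    (hbdd : ∀ n, ∃ M, ∀ ω, |ξ n ω| ≤ M) (hbddlim : ∃ M, ∀ ω, |ξlim ω| ≤ M)
    (hL1 : Tendsto (fun n => ⨆ P : Pfam, ∫ ω, |ξ n ω - ξlim ω| ∂(P : Measure Ω))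
      atTop (𝓝 0)) :
    ∃ φ : ℕ → ℕ, StrictMono φ ∧
      ∃ A : Set Ω, MeasurableSet A ∧ (∀ P ∈ Pfam, P A = 0) ∧
        ∀ ω ∉ A, Tendsto (fun k => ξ (φ k) ω) atTop (𝓝 (ξlim ω)) := by
  obtain ⟨M', hM'⟩ := hbddlim
  -- integrability of the differences
  have hint : ∀ n, ∀ P ∈ Pfam, Integrable (fun ω => ξ n ω - ξlim ω) P := by
    intro n P hP
    haveI := hprob P hP
    obtain ⟨M, hM⟩ := hbdd n
    refine Integrable.mono' (integrable_const (M + M'))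
      ((hmeas n).sub hmeaslim).aestronglyMeasurable
      (Filter.Eventually.of_forall fun ω => ?_)
    calc ‖ξ n ω - ξlim ω‖ ≤ |ξ n ω| + |ξlim ω| := abs_sub _ _
    _ ≤ M + M' := add_le_add (hM ω) (hM' ω)
  -- bound on the integrals, hence BddAbove
  have hbAbove : ∀ n, BddAbove (Set.range fun P : Pfam =>
      ∫ ω, |ξ n ω - ξlim ω| ∂(P : Measure Ω)) := by
    intro n
    obtain ⟨M, hM⟩ := hbdd n
    refine ⟨M + M', ?_⟩
    rintro x ⟨⟨P, hP⟩, rfl⟩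
    haveI := hprob P hP
    calc ∫ ω, |ξ n ω - ξlim ω| ∂P ≤ ∫ _, (M + M') ∂P := by
          refine integral_mono ((hint n P hP).abs) (integrable_const _) fun ω => ?_
          calc |ξ n ω - ξlim ω| ≤ |ξ n ω| + |ξlim ω| := abs_sub _ _
          _ ≤ M + M' := add_le_add (hM ω) (hM' ω)
    _ = M + M' := by simp
  -- extract subsequence
  have hev : ∀ k : ℕ, ∀ᶠ n in atTop,
      (⨆ P : Pfam, ∫ ω, |ξ n ω - ξlim ω| ∂(P : Measure Ω)) ≤ (1/2 : ℝ)^k := by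
    intro k
    have hpos : (0 : ℝ) < (1/2)^k := by positivity
    filter_upwards [hL1.eventually (eventually_le_nhds hpos)] with n hn using hn
  obtain ⟨φ, hφmono, hφ⟩ := Filter.extraction_forall_of_eventually hev
  -- the per-measure bound
  have hbound : ∀ k, ∀ P ∈ Pfam,
      ∫ ω, |ξ (φ k) ω - ξlim ω| ∂P ≤ (1/2 : ℝ)^k := by
    intro k P hP
    exact le_trans (le_ciSup (hbAbove (φ k)) ⟨P, hP⟩) (hφ k)
  set g : ℕ → Ω → ℝ := fun k ω => ξ (φ k) ω - ξlim ω with hg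
  have hgmeas : ∀ k, Measurable (g k) := fun k => (hmeas (φ k)).sub hmeaslim
  set A : Set Ω := {ω | Tendsto (fun k => g k ω) atTop (𝓝 0)}ᶜ with hA
  have hAm : MeasurableSet A := (measurableSet_tendsto (𝓝 (0:ℝ)) hgmeas).compl
  refine ⟨φ, hφmono, A, hAm, ?_, ?_⟩
  · -- A is P-null for every P
    intro P hP
    haveI := hprob P hP
    have hsum : (∑' k, ∫⁻ ω, ‖g k ω‖₊ ∂P) ≠ ∞ := by
      have hle : ∀ k, ∫⁻ ω, ‖g k ω‖₊ ∂P ≤ ENNReal.ofReal ((1/2 : ℝ)^k) := by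
        intro k
        have hi : Integrable (g k) P := hint (φ k) P hP
        have : ENNReal.ofReal (∫ ω, ‖g k ω‖ ∂P) = ∫⁻ ω, ‖g k ω‖₊ ∂P :=
          ofReal_integral_norm_eq_lintegral_enorm hi
        rw [← this]
        refine ENNReal.ofReal_le_ofReal ?_
        have : ∫ ω, ‖g k ω‖ ∂P = ∫ ω, |g k ω| ∂P := by
          simp [Real.norm_eq_abs]
        rw [this]
        exact hbound k P hP
      refine ne_top_of_le_ne_top ?_ (ENNReal.tsum_le_tsum hle)
      have : ∀ k : ℕ, ENNReal.ofReal ((1/2 : ℝ)^k) = (2⁻¹ : ℝ≥0∞)^k := by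
        intro k
        rw [ENNReal.ofReal_pow (by norm_num : (0:ℝ) ≤ 1/2)]
        congr 1
        rw [show (1/2 : ℝ) = 2⁻¹ by norm_num,
          ENNReal.ofReal_inv_of_pos (by norm_num : (0:ℝ) < 2)]
        norm_num
      simp_rw [this]
      rw [ENNReal.tsum_geometric]
      simp
    have hmeas_sum : Measurable fun ω => ∑' k, (‖g k ω‖₊ : ℝ≥0∞) :=
      Measurable.ennreal_tsum fun k => (hgmeas k).nnnorm.coe_nnreal_ennreal
    have hfin : ∀ᵐ ω ∂P, (∑' k, (‖g k ω‖₊ : ℝ≥0∞)) < ∞ := by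
      refine ae_lt_top hmeas_sum ?_
      rw [lintegral_tsum fun k => ((hgmeas k).nnnorm.coe_nnreal_ennreal).aemeasurable]
      exact hsum
    have hae : ∀ᵐ ω ∂P, Tendsto (fun k => g k ω) atTop (𝓝 0) := by
      filter_upwards [hfin] with ω hω
      have hsummable : Summable fun k => ‖g k ω‖₊ :=
        ENNReal.tsum_coe_ne_top_iff_summable.1 hω.ne
      have hsummable' : Summable fun k => ‖g k ω‖ := by
        have := NNReal.summable_coe.2 hsummable
        simpa [coe_nnnorm] using this
      exact tendsto_zero_iff_norm_tendsto_zero.2 hsummable'.tendsto_atTop_zero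
    rw [hA]
    exact mem_ae_iff.mp (Filter.eventually_iff.mp hae)
  · intro ω hω
    have hω' : Tendsto (fun k => g k ω) atTop (𝓝 0) := by
      simpa [A] using hω
    have := hω'.add_const (ξlim ω)
    simpa [g, sub_add_cancel] using this
end
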